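/- Let κ be an uncountable regular cardinal with 2^{<κ} = κ. Then cof(𝓜_κ) ≤ max{𝔡_κ, non(𝓜_κ)}. -/

import Mathlib

namespace GenCichon

noncomputable section

open Cardinal Set Ordinal

variable (κ : Cardinal.{0})

/-- The ordinals below `κ`, i.e. the cardinal `κ` viewed as a set of ordinals. -/
abbrev Idx : Type 1 := ↥(Set.Iio κ.ord)

/-- The generalized Cantor space `2^κ`. -/
abbrev GenCantor : Type 1 := Idx κ → Bool

/-- The generalized Baire space `κ^κ`. -/
abbrev GenBaire : Type 1 := Idx κ → Idx κ

/-- The basic open (cylinder) set `[σ]` determined by the element `σ` of `2^{<κ}`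
with domain `[0, δ)` (values of `σ` at or above `δ` are irrelevant). -/
def cyl (δ : Ordinal) (σ : Ordinal → Bool) : Set (GenCantor κ) :=
  { x | ∀ β : Idx κ, β.1 < δ → x β = σ β.1 }

/-- `A ⊆ 2^κ` is nowhere dense: every basic open set `[σ]`, `σ ∈ 2^{<κ}`, has a
basic open refinement `[σ'] ⊆ [σ]` disjoint from `A`. -/
def IsNwd (A : Set (GenCantor κ)) : Prop :=
  ∀ δ < κ.ord, ∀ σ : Ordinal → Bool, ∃ δ', δ ≤ δ' ∧ δ' < κ.ord ∧
    ∃ σ' : Ordinal → Bool, (∀ β < δ, σ' β = σ β) ∧ cyl κ δ' σ' ∩ A = ∅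

/-- `A ⊆ 2^κ` is `κ`-meager: a union of `κ` many nowhere dense sets. -/
def IsKMeager (A : Set (GenCantor κ)) : Prop :=
  ∃ B : Idx κ → Set (GenCantor κ), (∀ i, IsNwd κ (B i)) ∧ A = ⋃ i, B i

/-- The covering number of the `κ`-meager ideal. -/
def covM : Cardinal.{1} :=
  sInf { c : Cardinal.{1} | ∃ J : Set (Set (GenCantor κ)),
    (∀ A ∈ J, IsKMeager κ A) ∧ ⋃₀ J = Set.univ ∧ c = #J }

/-- The uniformity number of the `κ`-meager ideal. -/
def nonM : Cardinal.{1} :=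
  sInf { c : Cardinal.{1} | ∃ X : Set (GenCantor κ), ¬ IsKMeager κ X ∧ c = #X }

/-- The additivity number of the `κ`-meager ideal. -/
def addM : Cardinal.{1} :=
  sInf { c : Cardinal.{1} | ∃ J : Set (Set (GenCantor κ)),
    (∀ A ∈ J, IsKMeager κ A) ∧ ¬ IsKMeager κ (⋃₀ J) ∧ c = #J }

/-- The cofinality number of the `κ`-meager ideal. -/
def cofM : Cardinal.{1} :=
  sInf { c : Cardinal.{1} | ∃ J : Set (Set (GenCantor κ)),
    (∀ A ∈ J, IsKMeager κ A) ∧ (∀ A, IsKMeager κ A → ∃ B ∈ J, A ⊆ B) ∧ c = #J }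

/-- `g` eventually dominates `f` (`f <* g`). -/
def EvDom (f g : GenBaire κ) : Prop :=
  ∃ α : Idx κ, ∀ β : Idx κ, α < β → f β < g β

/-- The unbounding number `𝔟_κ`. -/
def bK : Cardinal.{1} :=
  sInf { c : Cardinal.{1} | ∃ F : Set (GenBaire κ),
    (∀ g : GenBaire κ, ∃ f ∈ F, ¬ EvDom κ f g) ∧ c = #F }

/-- The dominating number `𝔡_κ`. -/
def dK : Cardinal.{1} :=
  sInf { c : Cardinal.{1} | ∃ F : Set (GenBaire κ),
    (∀ g : GenBaire κ, ∃ f ∈ F, EvDom κ g f) ∧ c = #F }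

/-- `f` and `g` are eventually different (`f ≠* g`). -/
def EvDiff (f g : GenBaire κ) : Prop :=
  #{ α : Idx κ | f α = g α } < Cardinal.lift.{1} κ

/-- `𝔟_κ(≠*)`: least size of a family such that every `g` is cofinally matching
with some member of it. -/
def bNeq : Cardinal.{1} :=
  sInf { c : Cardinal.{1} | ∃ F : Set (GenBaire κ),
    (∀ g : GenBaire κ, ∃ f ∈ F, ¬ EvDiff κ f g) ∧ c = #F }

/-- `𝔡_κ(≠*)`: least size of a family such that every `g` is eventually different
from some member of it. -/
def dNeq : Cardinal.{1} :=
  sInf { c : Cardinal.{1} | ∃ F : Set (GenBaire κ),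
    (∀ g : GenBaire κ, ∃ f ∈ F, EvDiff κ f g) ∧ c = #F }

/-- An interval partition of `κ`: a strictly increasing continuous sequence
`(pts α : α < κ)` of ordinals below `κ` with `pts 0 = 0`; the `α`-th interval is
`[pts α, pts (α+1))`.  (Values at or above `κ` are normalized to `0`, so that an
interval partition is determined by its restriction below `κ`.) -/
structure IntervalPartition where
  pts : Ordinal → Ordinal
  zero : pts 0 = 0
  lt_ord : ∀ α < κ.ord, pts α < κ.ord
  strictMono : ∀ α β : Ordinal, α < β → β < κ.ord → pts α < pts β
  isCont : ∀ δ < κ.ord, Order.IsSuccLimit δ → pts δ = ⨆ β : ↥(Set.Iio δ), pts β.1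
  eq_zero_of_le : ∀ α, κ.ord ≤ α → pts α = 0

/-- The `β`-th interval of `J` is included in the `α`-th interval of `I`. -/
def SubIntv (J : IntervalPartition κ) (β : Ordinal) (I : IntervalPartition κ)
    (α : Ordinal) : Prop :=
  I.pts α ≤ J.pts β ∧ J.pts (β + 1) ≤ I.pts (α + 1)

/-- `I` dominates `J` (`J ≤* I`): from some point on, every interval of `I`
contains an interval of `J`. -/
def IPDom (J I : IntervalPartition κ) : Prop :=
  ∃ γ < κ.ord, ∀ α, γ < α → α < κ.ord → ∃ β < κ.ord, SubIntv κ J β I α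

/-- `y` matches the `κ`-chopped function `(x, I)`: `y` and `x` agree on cofinally
many intervals of `I`. -/
def Matches (y x : GenCantor κ) (I : IntervalPartition κ) : Prop :=
  ∀ γ < κ.ord, ∃ α, γ ≤ α ∧ α < κ.ord ∧
    ∀ β : Idx κ, I.pts α ≤ β.1 → β.1 < I.pts (α + 1) → y β = x β

/-- The set of elements of `2^κ` matching the `κ`-chopped function `(x, I)`. -/
def MatchSet (x : GenCantor κ) (I : IntervalPartition κ) : Set (GenCantor κ) :=
  { y | Matches κ y x I }

/-- `h ∈ κ^κ` tends to `κ`: `lim_{α → κ} h(α) = κ`. -/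
def TendsToTop (h : GenBaire κ) : Prop :=
  ∀ γ : Idx κ, ∃ α : Idx κ, ∀ β : Idx κ, α ≤ β → γ ≤ h β

/-- `φ` is an `h`-slalom: `φ(α)` is a subset of `κ` of cardinality `|h(α)|`. -/
def IsSlalom (h : GenBaire κ) (φ : Idx κ → Set (Idx κ)) : Prop :=
  ∀ α : Idx κ, #(φ α) = Cardinal.lift.{1} (h α).1.card

/-- The (total) slalom `φ` localizes `f` (`f ∈* φ`). -/
def Localizes (φ : Idx κ → Set (Idx κ)) (f : GenBaire κ) : Prop :=
  #{ α : Idx κ | f α ∉ φ α } < Cardinal.lift.{1} κ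

/-- `𝔟_h(∈*)`. -/
def bLoc (h : GenBaire κ) : Cardinal.{1} :=
  sInf { c : Cardinal.{1} | ∃ F : Set (GenBaire κ),
    (∀ φ : Idx κ → Set (Idx κ), IsSlalom κ h φ → ∃ f ∈ F, ¬ Localizes κ φ f) ∧ c = #F }

/-- `𝔡_h(∈*)`. -/
def dLoc (h : GenBaire κ) : Cardinal.{1} :=
  sInf { c : Cardinal.{1} | ∃ Φ : Set (Idx κ → Set (Idx κ)),
    (∀ φ ∈ Φ, IsSlalom κ h φ) ∧ (∀ f : GenBaire κ, ∃ φ ∈ Φ, Localizes κ φ f) ∧ c = #Φ }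

/-- A partial `h`-slalom: a slalom whose domain is a subset of `κ` of cardinality `κ`.
(The values outside the domain are normalized to `∅`.) -/
structure PartialSlalom (h : GenBaire κ) where
  dom : Set (Idx κ)
  dom_card : #dom = Cardinal.lift.{1} κ
  fn : Idx κ → Set (Idx κ)
  fn_card : ∀ α ∈ dom, #(fn α) = Cardinal.lift.{1} (h α).1.card
  eq_empty_of_not_mem : ∀ α ∉ dom, fn α = ∅

/-- The partial slalom `φ` localizes `f` (`f ∈* φ`). -/
def PLocalizes {h : GenBaire κ} (φ : PartialSlalom κ h) (f : GenBaire κ) : Prop :=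
  #{ α : Idx κ | α ∈ φ.dom ∧ f α ∉ φ.fn α } < Cardinal.lift.{1} κ

/-- `𝔟_h(p∈*)`. -/
def bPLoc (h : GenBaire κ) : Cardinal.{1} :=
  sInf { c : Cardinal.{1} | ∃ F : Set (GenBaire κ),
    (∀ φ : PartialSlalom κ h, ∃ f ∈ F, ¬ PLocalizes κ φ f) ∧ c = #F }

/-- `𝔡_h(p∈*)`. -/
def dPLoc (h : GenBaire κ) : Cardinal.{1} :=
  sInf { c : Cardinal.{1} | ∃ Φ : Set (PartialSlalom κ h),
    (∀ f : GenBaire κ, ∃ φ ∈ Φ, PLocalizes κ φ f) ∧ c = #Φ }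

/-- `X ⊆ 2^κ` is open in the `<κ`-box topology. -/
def IsOpenK (X : Set (GenCantor κ)) : Prop :=
  ∀ x ∈ X, ∃ δ < κ.ord, { y : GenCantor κ | ∀ β : Idx κ, β.1 < δ → y β = x β } ⊆ X

/-- `X ⊆ 2^κ` is dense: it meets every basic open set. -/
def IsDenseK (X : Set (GenCantor κ)) : Prop :=
  ∀ δ < κ.ord, ∀ σ : Ordinal → Bool, (cyl κ δ σ ∩ X).Nonempty

/-- Coordinatewise addition modulo 2 on `2^κ`. -/
def addMod2 (x y : GenCantor κ) : GenCantor κ := fun α => Bool.xor (x α) (y α)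

/-- The identification of `σ ∈ 2^{<κ}` (with domain `[0, δ)`) with the element of
`2^κ` extending `σ` by `0`'s. -/
def extendZero (δ : Ordinal) (σ : Ordinal → Bool) : GenCantor κ :=
  fun α => if α.1 < δ then σ α.1 else false

end


end GenCichon

namespace GenCichon

open Cardinal Set Ordinal

section Aux

variable {κ : Cardinal.{0}}

/-! ### Basic ordinal facts -/

lemma theta_isLimit (hreg : κ.IsRegular) : Order.IsSuccLimit κ.ord :=
  Cardinal.isSuccLimit_ord hreg.aleph0_le

lemma theta_pos (hreg : κ.IsRegular) : (0 : Ordinal) < κ.ord :=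
  (theta_isLimit hreg).pos

lemma succ_lt_theta (hreg : κ.IsRegular) {β : Ordinal} (h : β < κ.ord) : β + 1 < κ.ord := by
  rw [Ordinal.add_one_eq_succ]
  exact (theta_isLimit hreg).succ_lt h

lemma add_lt_theta (hreg : κ.IsRegular) {a b : Ordinal} (ha : a < κ.ord) (hb : b < κ.ord) :
    a + b < κ.ord := by
  rw [Cardinal.lt_ord] at ha hb ⊢
  rw [Ordinal.card_add]
  exact Cardinal.add_lt_of_lt hreg.aleph0_le ha hb

lemma idx_nonempty (hreg : κ.IsRegular) : Nonempty (Idx κ) := ⟨⟨0, theta_pos hreg⟩⟩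

lemma mk_Idx : #(Idx κ) = Cardinal.lift.{1} κ := by
  have := Cardinal.mk_Iio_ordinal κ.ord
  rwa [Cardinal.card_ord] at this

lemma exists_surj {A B : Type 1} (hB : Nonempty B) (h : #B ≤ #A) :
    ∃ s : A → B, Function.Surjective s := by
  obtain ⟨g⟩ := (Cardinal.le_def B A).1 h
  exact ⟨Function.invFun g, Function.invFun_surjective g.injective⟩

/-- Bounding a `<κ`-indexed family of ordinals below `κ.ord`, by regularity. -/
lemma bound_lemma (hreg : κ.IsRegular) {p : Ordinal} (hp : p < κ.ord)
    (g : Ordinal → Ordinal) (hg : ∀ q, q < p → g q < κ.ord) :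
    ∃ b, b < κ.ord ∧ ∀ q, q < p → g q ≤ b := by
  classical
  set f : p.ToType → Ordinal := fun t => g ((Ordinal.ToType.mk (o := p)).symm t).1 with hf
  have hlt : ∀ t, f t < κ.ord := fun t => hg _ ((Ordinal.ToType.mk (o := p)).symm t).2
  have hcard : Cardinal.lift.{0} #(p.ToType) < (κ.ord).cof := by
    rw [Cardinal.lift_id, Cardinal.mk_toType, hreg.cof_eq]
    exact Cardinal.lt_ord.1 hp
  have hsup : iSup f < κ.ord := Ordinal.iSup_lt_ord_lift hcard hlt
  refine ⟨iSup f, hsup, fun q hq => ?_⟩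
  have : g q = f ((Ordinal.ToType.mk (o := p)) ⟨q, hq⟩) := by
    simp [hf]
  rw [this]
  exact le_ciSup (Ordinal.bddAbove_range f) _

end Aux

end GenCichon

namespace GenCichon

open Cardinal Set Ordinal

section Aux2

variable {κ : Cardinal.{0}}

lemma isNwd_mono {A B : Set (GenCantor κ)} (h : A ⊆ B) (hB : IsNwd κ B) : IsNwd κ A := by
  intro δ hδ σ
  obtain ⟨δ', h1, h2, σ', h3, h4⟩ := hB δ hδ σ
  refine ⟨δ', h1, h2, σ', h3, ?_⟩
  rw [Set.eq_empty_iff_forall_notMem] at h4 ⊢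
  exact fun z hz => h4 z ⟨hz.1, h hz.2⟩

lemma isNwd_empty : IsNwd κ (∅ : Set (GenCantor κ)) := by
  intro δ hδ σ
  exact ⟨δ, le_rfl, hδ, σ, fun _ _ => rfl, Set.inter_empty _⟩

lemma meager_of_subset_iUnion {W : Idx κ → Set (GenCantor κ)} (hW : ∀ i, IsNwd κ (W i))
    {A : Set (GenCantor κ)} (h : A ⊆ ⋃ i, W i) : IsKMeager κ A := by
  refine ⟨fun i => W i ∩ A, fun i => isNwd_mono Set.inter_subset_left (hW i), ?_⟩
  rw [← Set.iUnion_inter]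
  exact (Set.inter_eq_self_of_subset_right h).symm

lemma isNwd_singleton (hreg : κ.IsRegular) (w : GenCantor κ) :
    IsNwd κ ({w} : Set (GenCantor κ)) := by
  intro δ hδ σ
  refine ⟨δ + 1, le_of_lt (lt_add_one δ), succ_lt_theta hreg hδ, 
    fun β => if β < δ then σ β else !(w ⟨δ, hδ⟩), fun β hβ => if_pos hβ, ?_⟩
  rw [Set.eq_empty_iff_forall_notMem]
  rintro z ⟨hz1, hz2⟩
  rw [Set.mem_singleton_iff] at hz2
  subst hz2
  have := hz1 ⟨δ, hδ⟩ (lt_add_one δ)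
  simp only [if_neg (lt_irrefl δ)] at this
  exact (Bool.eq_not_self _).mp this

lemma meager_of_small (hreg : κ.IsRegular) {X : Set (GenCantor κ)}
    (h : #X ≤ Cardinal.lift.{1} κ) : IsKMeager κ X := by
  rcases X.eq_empty_or_nonempty with he | hne
  · subst he
    exact ⟨fun _ => ∅, fun _ => isNwd_empty, by simp⟩
  · have : Nonempty X := hne.to_subtype
    obtain ⟨s, hs⟩ := exists_surj this (h.trans mk_Idx.ge)
    refine meager_of_subset_iUnion (W := fun i => {(s i).1}) 
      (fun i => isNwd_singleton hreg _) ?_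
    intro z hz
    obtain ⟨i, hi⟩ := hs ⟨z, hz⟩
    exact Set.mem_iUnion.2 ⟨i, by rw [hi]; rfl⟩

end Aux2

end GenCichon

namespace GenCichon

open Cardinal Set Ordinal

/-- An enumeration of `2^{<κ}` by `κ`. -/
structure StemEnum (κ : Cardinal.{0}) where
  len : Idx κ → Ordinal
  val : Idx κ → Ordinal → Bool
  len_lt : ∀ i, len i < κ.ord
  exact' : ∀ m, m < κ.ord → ∀ w : Ordinal → Bool,
    ∃ i, len i = m ∧ ∀ β, β < m → val i β = w β

section Aux3

variable {κ : Cardinal.{0}}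

lemma aleph0_le_lift (hunc : Cardinal.aleph0 < κ) : ℵ₀ ≤ Cardinal.lift.{1} κ := by
  simpa using Cardinal.lift_le.{1}.2 hunc.le

lemma stemEnum_exists (hreg : κ.IsRegular) (hunc : Cardinal.aleph0 < κ)
    (hsm : ∀ μ < κ, (2 : Cardinal) ^ μ ≤ κ) : Nonempty (StemEnum κ) := by
  classical
  set T : Type 1 := Σ l : ↥(Set.Iio κ.ord), (↥(Set.Iio l.1) → Bool) with hT
  have hTne : Nonempty T := ⟨⟨⟨0, theta_pos hreg⟩, fun b => absurd b.2 (not_lt_of_ge (zero_le (a := b.1)))⟩⟩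
  have hcard : #T ≤ Cardinal.lift.{1} κ := by
    rw [hT, Cardinal.mk_sigma]
    have hbd : ∀ l : ↥(Set.Iio κ.ord), #(↥(Set.Iio l.1) → Bool) ≤ Cardinal.lift.{1} κ := by
      intro l
      rw [Cardinal.mk_arrow, Cardinal.mk_Iio_ordinal]
      simp only [Cardinal.lift_lift, Cardinal.lift_id, Cardinal.mk_bool]
      rw [← Cardinal.lift_power]
      exact Cardinal.lift_le.2 (hsm _ (Cardinal.lt_ord.1 l.2))
    calc (Cardinal.sum fun l : ↥(Set.Iio κ.ord) => #(↥(Set.Iio l.1) → Bool))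
        ≤ Cardinal.sum (fun _ : ↥(Set.Iio κ.ord) => Cardinal.lift.{1} κ) :=
          Cardinal.sum_le_sum _ _ hbd
      _ = #(↥(Set.Iio κ.ord)) * Cardinal.lift.{1} κ := Cardinal.sum_const' _ _
      _ = Cardinal.lift.{1} κ * Cardinal.lift.{1} κ := by rw [mk_Idx]
      _ = Cardinal.lift.{1} κ := Cardinal.mul_eq_self (aleph0_le_lift hunc)
  obtain ⟨s, hs⟩ := exists_surj hTne (hcard.trans mk_Idx.ge)
  refine ⟨⟨fun i => (s i).1.1,
    fun i β => if h : β < (s i).1.1 then (s i).2 ⟨β, h⟩ else false,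
    fun i => (s i).1.2, ?_⟩⟩
  intro m hm w
  obtain ⟨i, hi⟩ := hs ⟨⟨m, hm⟩, fun b => w b.1⟩
  constructor
  case w => exact i
  constructor
  · show (s i).1.1 = m
    rw [hi]
  · intro β hβ
    have hβ' : β < (s i).1.1 := by rw [hi]; exact hβ
    show (if h : β < (s i).1.1 then (s i).2 ⟨β, h⟩ else false) = w β
    rw [dif_pos hβ']
    have key : ∀ (t : T) (ht : s i = t) (h2 : β < t.1.1),
        (s i).2 ⟨β, by rw [ht]; exact h2⟩ = t.2 ⟨β, h2⟩ := by
      rintro t rfl h2; rfl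
    exact key ⟨⟨m, hm⟩, fun b => w b.1⟩ hi hβ

/-- Indices of stems extending a given stem are unbounded in the enumeration. -/
lemma stemEnum_unbdd (hreg : κ.IsRegular) (E : StemEnum κ)
    {δ : Ordinal} (hδ : δ < κ.ord) (w : Ordinal → Bool) (γ : Idx κ) :
    ∃ i, γ ≤ i ∧ δ ≤ E.len i ∧ ∀ β, β < δ → E.val i β = w β := by
  classical
  have hm : ∀ ι : Idx κ, δ + ι.1 + 1 < κ.ord := fun ι =>
    succ_lt_theta hreg (add_lt_theta hreg hδ ι.2)
  set F : Idx κ → Idx κ := fun ι => (E.exact' (δ + ι.1 + 1) (hm ι) w).choose with hF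
  have hFspec : ∀ ι, E.len (F ι) = δ + ι.1 + 1 ∧ ∀ β, β < δ + ι.1 + 1 → E.val (F ι) β = w β :=
    fun ι => (E.exact' (δ + ι.1 + 1) (hm ι) w).choose_spec
  have hdle : ∀ ι : Idx κ, δ ≤ δ + ι.1 := fun ι => le_self_add
  have hFinj : Function.Injective F := by
    intro a b hab
    have h1 : δ + a.1 + 1 = δ + b.1 + 1 := by
      rw [← (hFspec a).1, ← (hFspec b).1, hab]
    rw [Ordinal.add_one_eq_succ, Ordinal.add_one_eq_succ, Order.succ_eq_succ_iff] at h1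
    exact Subtype.ext ((add_left_cancel_iff (a := δ)).1 h1)
  by_contra hcon
  push_neg at hcon
  have hrange : ∀ ι, (F ι).1 < γ.1 := by
    intro ι
    by_contra hge
    push_neg at hge
    have hle : γ ≤ F ι := hge
    obtain ⟨β, hβ, hne⟩ := hcon (F ι) hle (by
      rw [(hFspec ι).1]; exact (hdle ι).trans (le_of_lt (lt_add_one _)))
    exact hne ((hFspec ι).2 β (hβ.trans_le ((hdle ι).trans (le_of_lt (lt_add_one _)))))
  set G : Idx κ → ↥(Set.Iio γ.1) := fun ι => ⟨(F ι).1, hrange ι⟩ with hG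
  have hGinj : Function.Injective G := by
    intro a b hab
    have h3 := congrArg Subtype.val hab
    exact hFinj (Subtype.ext h3)
  have hle2 : Cardinal.lift.{1} κ ≤ Cardinal.lift.{1} γ.1.card := by
    calc Cardinal.lift.{1} κ = #(Idx κ) := mk_Idx.symm
      _ ≤ #(↥(Set.Iio γ.1)) := Cardinal.mk_le_of_injective hGinj
      _ = Cardinal.lift.{1} γ.1.card := Cardinal.mk_Iio_ordinal γ.1
  exact absurd (Cardinal.lt_ord.1 γ.2) (not_lt.2 (Cardinal.lift_le.1 hle2))

lemma pairing_exists (hreg : κ.IsRegular) (hunc : Cardinal.aleph0 < κ) :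
    ∃ Q : Idx κ → Idx κ × Idx κ, Function.Surjective Q := by
  have h1 : #(Idx κ × Idx κ) ≤ #(Idx κ) := by
    simp only [Cardinal.mk_prod, Cardinal.lift_id, mk_Idx]
    rw [Cardinal.mul_eq_self (aleph0_le_lift hunc)]
  have hne : Nonempty (Idx κ × Idx κ) := by
    obtain ⟨i⟩ := idx_nonempty hreg
    exact ⟨(i, i)⟩
  exact exists_surj hne h1

end Aux3

end GenCichon

namespace GenCichon

open Cardinal Set Ordinal

section Aux4

variable {κ : Cardinal.{0}}

attribute [local instance] Classical.propDecidable

/-- Amalgamation of previous approximations. -/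
noncomputable def killAmal (R : Ordinal → Ordinal × (Ordinal → Bool)) (p β : Ordinal) : Bool :=
  if h : ∃ q, q < p ∧ β < (R q).1 then (R h.choose).2 β else false

/-- Start of the fresh part at step `p`. -/
noncomputable def killEta (E : StemEnum κ) (i : Idx κ)
    (R : Ordinal → Ordinal × (Ordinal → Bool)) (p : Ordinal) : Ordinal :=
  max (max (sSup {o | ∃ q, q < p ∧ o = (R q).1}) (p + 1)) (E.len i)

/-- The stem fed to the nowhere dense set at step `p`. -/
noncomputable def killTau (E : StemEnum κ) (i : Idx κ)
    (R : Ordinal → Ordinal × (Ordinal → Bool)) (p : Ordinal) : Ordinal → Bool :=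
  fun β => if β < E.len i then E.val i β else killAmal R p β

noncomputable def killStep (E : StemEnum κ) (N : Idx κ → Set (GenCantor κ))
    (hN : ∀ γ, IsNwd κ (N γ)) (R : Ordinal → Ordinal × (Ordinal → Bool))
    (p : Ordinal) (i γ : Idx κ) : Ordinal × (Ordinal → Bool) :=
  if hη : killEta E i R p < κ.ord then
    ⟨(hN γ (killEta E i R p) hη (killTau E i R p)).choose,
     fun β => if β < killEta E i R p then killAmal R p β
              else (hN γ (killEta E i R p) hη (killTau E i R p)).choose_spec.2.2.choose β⟩
  else ⟨p + 1, killAmal R p⟩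

noncomputable def killF (E : StemEnum κ) (Q : Idx κ → Idx κ × Idx κ)
    (N : Idx κ → Set (GenCantor κ)) (hN : ∀ γ, IsNwd κ (N γ)) (p : Ordinal)
    (IH : ∀ q, q < p → Ordinal × (Ordinal → Bool)) : Ordinal × (Ordinal → Bool) :=
  if hp : p < κ.ord then
    killStep E N hN (fun q => if hq : q < p then IH q hq else ⟨0, fun _ => false⟩) p
      ((Q ⟨p, hp⟩).1) ((Q ⟨p, hp⟩).2)
  else ⟨0, fun _ => false⟩

noncomputable def killR (E : StemEnum κ) (Q : Idx κ → Idx κ × Idx κ)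
    (N : Idx κ → Set (GenCantor κ)) (hN : ∀ γ, IsNwd κ (N γ)) : Ordinal → Ordinal × (Ordinal → Bool) :=
  Ordinal.lt_wf.fix (killF E Q N hN)

lemma killR_eq (E : StemEnum κ) (Q : Idx κ → Idx κ × Idx κ)
    (N : Idx κ → Set (GenCantor κ)) (hN : ∀ γ, IsNwd κ (N γ)) (p : Ordinal) :
    killR E Q N hN p = killF E Q N hN p (fun q _ => killR E Q N hN q) :=
  Ordinal.lt_wf.fix_eq _ p

section KillProps

variable (E : StemEnum κ) (Q : Idx κ → Idx κ × Idx κ)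
    (N : Idx κ → Set (GenCantor κ)) (hN : ∀ γ, IsNwd κ (N γ))

/-- The restricted predecessor function used at step `p`. -/
noncomputable def killRes (p : Ordinal) : Ordinal → Ordinal × (Ordinal → Bool) :=
  fun q => if _ : q < p then killR E Q N hN q else ⟨0, fun _ => false⟩

lemma killRes_eq {p q : Ordinal} (hq : q < p) :
    killRes E Q N hN p q = killR E Q N hN q := dif_pos hq

lemma killR_eq' {p : Ordinal} (hp : p < κ.ord) :
    killR E Q N hN p =
      killStep E N hN (killRes E Q N hN p) p ((Q ⟨p, hp⟩).1) ((Q ⟨p, hp⟩).2) := by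
  rw [killR_eq, killF, dif_pos hp]
  rfl

lemma killEta_lt (hreg : κ.IsRegular) {p : Ordinal} (hp : p < κ.ord) (i : Idx κ)
    (hends : ∀ q, q < p → (killR E Q N hN q).1 < κ.ord) :
    killEta E i (killRes E Q N hN p) p < κ.ord ∧
    ∀ q, q < p → (killR E Q N hN q).1 ≤ killEta E i (killRes E Q N hN p) p := by
  obtain ⟨b, hb, hub⟩ := bound_lemma hreg hp (fun q => (killR E Q N hN q).1) hends
  have hubs : b ∈ upperBounds {o | ∃ q, q < p ∧ o = (killRes E Q N hN p q).1} := by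
    rintro o ⟨q, hq, rfl⟩
    rw [killRes_eq E Q N hN hq]
    exact hub q hq
  have hsup : sSup {o | ∃ q, q < p ∧ o = (killRes E Q N hN p q).1} ≤ b := csSup_le' hubs
  constructor
  · apply max_lt (max_lt (lt_of_le_of_lt hsup hb) (succ_lt_theta hreg hp)) (E.len_lt i)
  · intro q hq
    have hmem : (killR E Q N hN q).1 ∈ {o | ∃ q', q' < p ∧ o = (killRes E Q N hN p q').1} :=
      ⟨q, hq, by rw [killRes_eq E Q N hN hq]⟩
    calc (killR E Q N hN q).1
        ≤ sSup {o | ∃ q', q' < p ∧ o = (killRes E Q N hN p q').1} :=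
          le_csSup ⟨b, hubs⟩ hmem
      _ ≤ max (sSup {o | ∃ q', q' < p ∧ o = (killRes E Q N hN p q').1}) (p+1) := le_max_left _ _
      _ ≤ killEta E i (killRes E Q N hN p) p := le_max_left _ _

/-- Main invariant of the construction. -/
lemma killR_inv (hreg : κ.IsRegular) : ∀ p, p < κ.ord →
    (p < (killR E Q N hN p).1 ∧ (killR E Q N hN p).1 < κ.ord ∧
     ∀ q, q < p → ((killR E Q N hN q).1 ≤ (killR E Q N hN p).1 ∧
       ∀ β, β < (killR E Q N hN q).1 →
         (killR E Q N hN p).2 β = (killR E Q N hN q).2 β)) := by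
  intro p
  induction p using Ordinal.induction with
  | h p IH =>
  intro hp
  have hends : ∀ q, q < p → (killR E Q N hN q).1 < κ.ord :=
    fun q hq => (IH q hq (hq.trans hp)).2.1
  obtain ⟨hη, hetale⟩ := killEta_lt E Q N hN hreg hp ((Q ⟨p, hp⟩).1) hends
  set i := (Q ⟨p, hp⟩).1
  set γ := (Q ⟨p, hp⟩).2
  set R0 := killRes E Q N hN p with hR0
  have hstep := killR_eq' E Q N hN hp
  rw [killStep, dif_pos hη] at hstep
  set η := killEta E i R0 p with hηdef
  set w := hN γ η hη (killTau E i R0 p) with hw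
  have hspec := w.choose_spec
  obtain ⟨hle, hltord, hσ⟩ := hspec
  have hamal : ∀ q, q < p → ∀ β, β < (killR E Q N hN q).1 →
      killAmal R0 p β = (killR E Q N hN q).2 β := by
    intro q hq β hβ
    have hex : ∃ q', q' < p ∧ β < (R0 q').1 := ⟨q, hq, by rw [hR0, killRes_eq E Q N hN hq]; exact hβ⟩
    rw [killAmal, dif_pos hex]
    obtain ⟨hq0, hβ0⟩ := hex.choose_spec
    set q0 := hex.choose
    rw [hR0, killRes_eq E Q N hN hq0]
    rw [hR0, killRes_eq E Q N hN hq0] at hβ0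
    rcases lt_trichotomy q0 q with hlt | heq | hgt
    · exact (((IH q hq (hq.trans hp)).2.2 q0 hlt).2 β hβ0).symm
    · rw [heq]
    · exact ((IH q0 hq0 (hq0.trans hp)).2.2 q hgt).2 β hβ
  have hend1 : (killR E Q N hN p).1 = w.choose := by rw [hstep]
  refine ⟨?_, ?_, ?_⟩
  · rw [hend1]
    calc p < p + 1 := lt_add_one p
      _ ≤ max (sSup {o | ∃ q, q < p ∧ o = (R0 q).1}) (p+1) := le_max_right _ _
      _ ≤ η := le_max_left _ _
      _ ≤ w.choose := hle
  · rw [hend1]; exact hltord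
  · intro q hq
    constructor
    · rw [hend1]
      exact (hetale q hq).trans hle
    · intro β hβ
      have hβη : β < η := lt_of_lt_of_le hβ (hetale q hq)
      rw [hstep]
      show (fun β => if β < η then killAmal R0 p β else _) β = _
      simp only [if_pos hβη]
      exact hamal q hq β hβ

end KillProps

end Aux4

end GenCichon

namespace GenCichon

open Cardinal Set Ordinal

section Aux5

variable {κ : Cardinal.{0}}

attribute [local instance] Classical.propDecidable

variable (E : StemEnum κ) (Q : Idx κ → Idx κ × Idx κ)
    (N : Idx κ → Set (GenCantor κ)) (hN : ∀ γ, IsNwd κ (N γ))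

/-- The generic real built by the kill construction. -/
noncomputable def killX : GenCantor κ := fun β => (killR E Q N hN (β.1 + 1)).2 β.1

lemma killX_agree (hreg : κ.IsRegular) {p : Ordinal} (hp : p < κ.ord) {β : Idx κ}
    (hβ : β.1 < (killR E Q N hN p).1) :
    killX E Q N hN β = (killR E Q N hN p).2 β.1 := by
  have hb1 : β.1 + 1 < κ.ord := succ_lt_theta hreg β.2
  have hinv1 := killR_inv E Q N hN hreg (β.1 + 1) hb1
  have hβ' : β.1 < (killR E Q N hN (β.1 + 1)).1 := lt_of_lt_of_le (lt_add_one _) hinv1.1.le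
  rcases lt_trichotomy p (β.1 + 1) with h | h | h
  · exact (hinv1.2.2 p h).2 β.1 hβ
  · rw [killX, h]
  · exact (((killR_inv E Q N hN hreg p hp).2.2 (β.1 + 1) h).2 β.1 hβ').symm

lemma kill_cert (hreg : κ.IsRegular) (hQ : Function.Surjective Q) (i γ : Idx κ) :
    ∃ Lp : Ordinal, Lp < κ.ord ∧ E.len i ≤ Lp ∧
      ∀ z : GenCantor κ,
        (∀ β : Idx κ, β.1 < E.len i → z β = E.val i β.1) →
        (∀ β : Idx κ, E.len i ≤ β.1 → β.1 < Lp → z β = killX E Q N hN β) →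
        z ∉ N γ := by
  obtain ⟨pI, hpI⟩ := hQ (i, γ)
  have hp : pI.1 < κ.ord := pI.2
  set p := pI.1 with hpdef
  have hQp : Q ⟨p, hp⟩ = (i, γ) := by
    rw [show (⟨p, hp⟩ : Idx κ) = pI from Subtype.ext rfl]
    exact hpI
  have hQ1 : (Q ⟨p, hp⟩).1 = i := by rw [hQp]
  have hQ2 : (Q ⟨p, hp⟩).2 = γ := by rw [hQp]
  have hinvp := killR_inv E Q N hN hreg p hp
  have hends : ∀ q, q < p → (killR E Q N hN q).1 < κ.ord :=
    fun q hq => (killR_inv E Q N hN hreg q (hq.trans hp)).2.1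
  obtain ⟨hη, hetale⟩ := killEta_lt E Q N hN hreg hp i hends
  have hstep := killR_eq' E Q N hN hp
  rw [hQ1, hQ2] at hstep
  rw [killStep, dif_pos hη] at hstep
  set R0 := killRes E Q N hN p with hR0
  set η := killEta E i R0 p with hηdef
  set w := hN γ η hη (killTau E i R0 p) with hw
  obtain ⟨hle, hltord, hσ⟩ := w.choose_spec
  obtain ⟨hagree, hcyl⟩ := hσ.choose_spec
  set σ' := hσ.choose with hσ'def
  have hend1 : (killR E Q N hN p).1 = w.choose := congrArg Prod.fst hstep
  have happ : ∀ β, (killR E Q N hN p).2 β =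
      if β < η then killAmal R0 p β else σ' β := by
    intro β
    rw [hstep]
  have hlenle : E.len i ≤ η := le_max_right _ _
  refine ⟨(killR E Q N hN p).1, hinvp.2.1, hlenle.trans (by rw [hend1]; exact hle), ?_⟩
  intro z hz1 hz2 hzN
  have hzcyl : z ∈ cyl κ w.choose σ' := by
    intro β hβ
    have hβp : β.1 < (killR E Q N hN p).1 := by rw [hend1]; exact hβ
    have hxz : β.1 < E.len i ∨ (E.len i ≤ β.1 ∧ β.1 < η) ∨ η ≤ β.1 := by
      rcases lt_or_ge β.1 (E.len i) with h | h
      · exact Or.inl h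
      · rcases lt_or_ge β.1 η with h2 | h2
        · exact Or.inr (Or.inl ⟨h, h2⟩)
        · exact Or.inr (Or.inr h2)
    have hzx : E.len i ≤ β.1 → z β = (killR E Q N hN p).2 β.1 := by
      intro hli
      rw [hz2 β hli hβp, killX_agree E Q N hN hreg hp hβp]
    rcases hxz with h | ⟨h1, h2⟩ | h
    · rw [hz1 β h, hagree β.1 (lt_of_lt_of_le h hlenle), killTau, if_pos h]
    · rw [hzx h1, happ, if_pos h2, hagree β.1 h2, killTau, if_neg (not_lt.2 h1)]
    · rw [hzx (hlenle.trans h), happ, if_neg (not_lt.2 h)]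
  have : z ∈ cyl κ w.choose σ' ∩ N γ := ⟨hzcyl, hzN⟩
  rw [hcyl] at this
  exact this

/-- The kill construction packaged. -/
lemma kill_construction (hreg : κ.IsRegular) (hunc : Cardinal.aleph0 < κ)
    (hNwd : ∀ γ, IsNwd κ (N γ)) :
    ∃ (x : GenCantor κ) (L : Idx κ → Idx κ → Ordinal),
      (∀ i γ, L i γ < κ.ord) ∧ (∀ i γ, E.len i ≤ L i γ) ∧
      ∀ i γ (z : GenCantor κ),
        (∀ β : Idx κ, β.1 < E.len i → z β = E.val i β.1) →
        (∀ β : Idx κ, E.len i ≤ β.1 → β.1 < L i γ → z β = x β) →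
        z ∉ N γ := by
  obtain ⟨Q', hQ'⟩ := pairing_exists hreg hunc
  have h := fun i γ => kill_cert E Q' N hNwd hreg hQ' i γ
  choose L hL1 hL2 hL3 using h
  exact ⟨killX E Q' N hNwd, L, hL1, hL2, hL3⟩

end Aux5

end GenCichon

namespace GenCichon

open Cardinal Set Ordinal

section Aux6

variable {κ : Cardinal.{0}}

attribute [local instance] Classical.propDecidable

variable (E : StemEnum κ)

/-- The canonical matching event: `z` has head the `i`-th stem and then copies `y`
up to `f i`. -/
def matchEv (y : GenCantor κ) (f : GenBaire κ) (z : GenCantor κ) (i : Idx κ) : Prop :=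
  (∀ β : Idx κ, β.1 < E.len i → z β = E.val i β.1) ∧
  (∀ β : Idx κ, E.len i ≤ β.1 → β.1 < (f i).1 → z β = y β)

def Wset (y : GenCantor κ) (f : GenBaire κ) (γ : Idx κ) : Set (GenCantor κ) :=
  { z | ∀ i, γ ≤ i → ¬ matchEv E y f z i }

/-- The canonical meager set attached to `(y, f)`. -/
def Dhat (y : GenCantor κ) (f : GenBaire κ) : Set (GenCantor κ) := ⋃ γ, Wset E y f γ

lemma Wset_nwd (hreg : κ.IsRegular) (y : GenCantor κ) (f : GenBaire κ) (γ : Idx κ) :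
    IsNwd κ (Wset E y f γ) := by
  intro δ hδ σ
  obtain ⟨i, hγi, hδlen, hagr⟩ := stemEnum_unbdd hreg E hδ σ γ
  refine ⟨max (E.len i) (f i).1, hδlen.trans (le_max_left _ _),
    max_lt (E.len_lt i) (f i).2,
    fun β => if β < E.len i then E.val i β else (if h : β < κ.ord then y ⟨β, h⟩ else false),
    ?_, ?_⟩
  · intro β hβ
    dsimp only
    rw [if_pos (lt_of_lt_of_le hβ hδlen), hagr β hβ]
  · rw [Set.eq_empty_iff_forall_notMem]
    rintro z ⟨hz1, hz2⟩
    refine hz2 i hγi ⟨?_, ?_⟩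
    · intro β hβ
      have := hz1 β (lt_of_lt_of_le hβ (le_max_left _ _))
      dsimp only at this
      rwa [if_pos hβ] at this
    · intro β h1 h2
      have := hz1 β (lt_of_lt_of_le h2 (le_max_right _ _))
      dsimp only at this
      rw [if_neg (not_lt.2 h1), dif_pos (show (β : Ordinal) < κ.ord from β.2)] at this
      exact this

lemma Dhat_meager (hreg : κ.IsRegular) (y : GenCantor κ) (f : GenBaire κ) :
    IsKMeager κ (Dhat E y f) :=
  ⟨Wset E y f, fun γ => Wset_nwd E hreg y f γ, rfl⟩

/-- The set of good oracles relative to `(x, L)` at coordinates `(i, γ)`. -/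
def Vset (x : GenCantor κ) (L : Idx κ → Idx κ → Ordinal) (i γ : Idx κ) :
    Set (GenCantor κ) :=
  { y | ∃ m, E.len i ≤ m ∧ m < κ.ord ∧ ∃ j : Idx κ, E.len j = m ∧
      (∀ β, β < E.len i → E.val j β = E.val i β) ∧
      (∀ β (h : β < κ.ord), E.len i ≤ β → β < m → E.val j β = y ⟨β, h⟩) ∧
      (∀ β (h : β < κ.ord), m ≤ β → β < L j γ → y ⟨β, h⟩ = x ⟨β, h⟩) }

lemma Vset_compl_nwd (hreg : κ.IsRegular) (x : GenCantor κ)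
    (L : Idx κ → Idx κ → Ordinal) (hL1 : ∀ i γ, L i γ < κ.ord) (i γ : Idx κ) :
    IsNwd κ ((Vset E x L i γ)ᶜ) := by
  intro δ hδ σ
  set m := max δ (E.len i) with hmdef
  have hmθ : m < κ.ord := max_lt hδ (E.len_lt i)
  set xd : Ordinal → Bool := fun β => if h : β < κ.ord then x ⟨β, h⟩ else false with hxd
  set w : Ordinal → Bool := fun β => if β < E.len i then E.val i β
      else (if β < δ then σ β else xd β) with hwdef
  obtain ⟨j, hjlen, hjval⟩ := E.exact' m hmθ w
  refine ⟨max m (L j γ), (le_max_left δ _).trans (le_max_left _ _),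
    max_lt hmθ (hL1 j γ),
    fun β => if β < δ then σ β else xd β,
    fun β hβ => if_pos hβ, ?_⟩
  rw [Set.eq_empty_iff_forall_notMem]
  rintro y ⟨hy1, hy2⟩
  apply hy2
  refine ⟨m, le_max_right _ _, hmθ, j, hjlen, ?_, ?_, ?_⟩
  · intro β hβ
    rw [hjval β (lt_of_lt_of_le hβ (le_max_right δ _)), hwdef]
    exact if_pos hβ
  · intro β h h1 h2
    rw [hjval β h2, hwdef]
    have hyβ := hy1 ⟨β, h⟩ (lt_of_lt_of_le h2 (le_max_left _ _))
    show (if β < E.len i then E.val i β else (if β < δ then σ β else xd β)) = y ⟨β, h⟩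
    rw [if_neg (not_lt.2 h1), hyβ]
  · intro β h h1 h2
    have hyβ := hy1 ⟨β, h⟩ (lt_of_lt_of_le h2 (le_max_right m _))
    rw [hyβ]
    have hδβ : ¬ β < δ := not_lt.2 ((le_max_left δ (E.len i)).trans h1)
    show (if β < δ then σ β else xd β) = x ⟨β, h⟩
    rw [if_neg hδβ, hxd]
    exact dif_pos h

lemma good_oracle (hreg : κ.IsRegular) (hunc : Cardinal.aleph0 < κ) (x : GenCantor κ)
    (L : Idx κ → Idx κ → Ordinal) (hL1 : ∀ i γ, L i γ < κ.ord)
    {X : Set (GenCantor κ)} (hX : ¬ IsKMeager κ X) :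
    ∃ y ∈ X, ∀ i γ, y ∈ Vset E x L i γ := by
  obtain ⟨Q, hQ⟩ := pairing_exists hreg hunc
  by_contra hcon
  push_neg at hcon
  apply hX
  apply meager_of_subset_iUnion (W := fun pr => (Vset E x L (Q pr).1 (Q pr).2)ᶜ)
    (fun pr => Vset_compl_nwd E hreg x L hL1 _ _)
  intro y hy
  obtain ⟨i, γ, hv⟩ := hcon y hy
  obtain ⟨pr, hpr⟩ := hQ (i, γ)
  refine Set.mem_iUnion.2 ⟨pr, ?_⟩
  rw [hpr]
  exact hv

end Aux6

end GenCichon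

namespace GenCichon

open Cardinal Set Ordinal

section Main

variable {κ : Cardinal.{0}}

lemma dK_set_nonempty (hreg : κ.IsRegular) :
    {c : Cardinal.{1} | ∃ F : Set (GenBaire κ),
      (∀ g : GenBaire κ, ∃ f ∈ F, EvDom κ g f) ∧ c = #F}.Nonempty := by
  refine ⟨#(Set.univ : Set (GenBaire κ)), Set.univ, fun g => ?_, rfl⟩
  obtain ⟨i0⟩ := idx_nonempty hreg
  refine ⟨fun β => ⟨(g β).1 + 1, succ_lt_theta hreg (g β).2⟩, Set.mem_univ _, i0, fun β _ => ?_⟩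
  exact Subtype.coe_lt_coe.1 (lt_add_one _)

lemma main_aux (hreg : κ.IsRegular) (hunc : Cardinal.aleph0 < κ)
    (hsm : ∀ μ < κ, (2 : Cardinal) ^ μ ≤ κ) (E : StemEnum κ)
    {X : Set (GenCantor κ)} (hXnm : ¬ IsKMeager κ X)
    {Fd : Set (GenBaire κ)} (hFdom : ∀ g : GenBaire κ, ∃ f ∈ Fd, EvDom κ g f)
    {A : Set (GenCantor κ)} (hA : IsKMeager κ A) :
    ∃ B ∈ Set.image2 (fun y f => Dhat E y f) X Fd, A ⊆ B := by
  classical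
  obtain ⟨Nf, hNwd, hAeq⟩ := hA
  obtain ⟨x, L, hL1, hL2, hKill⟩ := kill_construction E Nf hreg hunc hNwd
  obtain ⟨y, hyX, hyV⟩ := good_oracle E hreg hunc x L hL1 hXnm
  choose m hm1 hm2 j hj1 hj2 hj3 hj4 using hyV
  have hbd : ∀ i : Idx κ, ∃ b, b < κ.ord ∧
      ∀ γ : Idx κ, γ ≤ i → m i γ < b ∧ L (j i γ) γ < b := by
    intro i
    obtain ⟨b, hbθ, hble⟩ := bound_lemma hreg (succ_lt_theta hreg i.2)
      (fun q => if h : q < κ.ord then max (m i ⟨q, h⟩) (L (j i ⟨q, h⟩) ⟨q, h⟩) + 1 else 0)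
      (fun q hq => by
        have hqθ : q < κ.ord := hq.trans (succ_lt_theta hreg i.2)
        simp only [dif_pos hqθ]
        exact succ_lt_theta hreg (max_lt (hm2 i ⟨q, hqθ⟩) (hL1 _ _)))
    refine ⟨b, hbθ, fun γ hγ => ?_⟩
    have hq : γ.1 < i.1 + 1 := lt_of_le_of_lt (Subtype.coe_le_coe.2 hγ) (lt_add_one _)
    have hb2 := hble γ.1 hq
    simp only [dif_pos (show γ.1 < κ.ord from γ.2)] at hb2
    have heta : (⟨γ.1, γ.2⟩ : Idx κ) = γ := rfl
    rw [heta] at hb2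
    have hlt : max (m i γ) (L (j i γ) γ) < b :=
      lt_of_lt_of_le (lt_add_one _) hb2
    exact ⟨(le_max_left _ _).trans_lt hlt, (le_max_right _ _).trans_lt hlt⟩
  choose b hbθ hbspec using hbd
  obtain ⟨f, hfF, α₀, hα₀⟩ := hFdom (fun i => ⟨b i, hbθ i⟩)
  refine ⟨Dhat E y f, Set.mem_image2_of_mem hyX hfF, ?_⟩
  intro z hz
  rw [hAeq] at hz
  obtain ⟨γ₀, hzN⟩ := Set.mem_iUnion.1 hz
  by_contra hnot
  have hW : ∀ γ, z ∉ Wset E y f γ := fun γ hWγ => hnot (Set.mem_iUnion.2 ⟨γ, hWγ⟩)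
  have hγθ : max γ₀.1 α₀.1 + 1 < κ.ord := succ_lt_theta hreg (max_lt γ₀.2 α₀.2)
  have hWs : ¬ ∀ i, (⟨max γ₀.1 α₀.1 + 1, hγθ⟩ : Idx κ) ≤ i → ¬ matchEv E y f z i :=
    hW ⟨max γ₀.1 α₀.1 + 1, hγθ⟩
  push_neg at hWs
  obtain ⟨i, hγi, hev⟩ := hWs
  have hγi' : max γ₀.1 α₀.1 + 1 ≤ i.1 := Subtype.coe_le_coe.2 hγi
  have hγ₀i : γ₀ ≤ i := by
    apply Subtype.coe_le_coe.1
    calc γ₀.1 ≤ max γ₀.1 α₀.1 := le_max_left _ _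
      _ ≤ max γ₀.1 α₀.1 + 1 := le_of_lt (lt_add_one _)
      _ ≤ i.1 := hγi'
  have hα₀i : α₀ < i := by
    apply Subtype.coe_lt_coe.1
    calc α₀.1 ≤ max γ₀.1 α₀.1 := le_max_right _ _
      _ < max γ₀.1 α₀.1 + 1 := lt_add_one _
      _ ≤ i.1 := hγi'
  have hbf : b i < (f i).1 := Subtype.coe_lt_coe.2 (hα₀ i hα₀i)
  obtain ⟨hmlt, hLlt⟩ := hbspec i γ₀ hγ₀i
  have hmf : m i γ₀ < (f i).1 := hmlt.trans hbf
  have hLf : L (j i γ₀) γ₀ < (f i).1 := hLlt.trans hbf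
  obtain ⟨hev1, hev2⟩ := hev
  refine hKill (j i γ₀) γ₀ z ?_ ?_ hzN
  · -- head
    intro β hβ
    rw [hj1 i γ₀] at hβ
    rcases lt_or_ge β.1 (E.len i) with h | h
    · rw [hev1 β h]
      exact (hj2 i γ₀ β.1 h).symm
    · rw [hev2 β h (hβ.trans hmf)]
      exact (hj3 i γ₀ β.1 β.2 h hβ).symm
  · -- middle
    intro β hβ1 hβ2
    rw [hj1 i γ₀] at hβ1
    have hβf : β.1 < (f i).1 := hβ2.trans hLf
    rw [hev2 β ((hm1 i γ₀).trans hβ1) hβf]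
    exact hj4 i γ₀ β.1 β.2 hβ1 hβ2

end Main

end GenCichon

namespace GenCichon

open Cardinal Set Ordinal

theorem cofM_le_max (κ : Cardinal.{0})
    (hreg : κ.IsRegular) (hunc : Cardinal.aleph0 < κ)
    (hsm : ∀ μ < κ, (2 : Cardinal) ^ μ ≤ κ) :
    cofM κ ≤ max (dK κ) (nonM κ) := by
  classical
  by_cases hX : ∃ X : Set (GenCantor κ), ¬ IsKMeager κ X
  · -- main case
    have hXne : {c : Cardinal.{1} | ∃ X : Set (GenCantor κ), ¬ IsKMeager κ X ∧ c = #X}.Nonempty := by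
      obtain ⟨X, hX'⟩ := hX
      exact ⟨#X, X, hX', rfl⟩
    have hXmem : nonM κ ∈ {c : Cardinal.{1} | ∃ X : Set (GenCantor κ), ¬ IsKMeager κ X ∧ c = #X} :=
      csInf_mem hXne
    obtain ⟨X, hXnm, hXcard⟩ := hXmem
    have hFmem : dK κ ∈ {c : Cardinal.{1} | ∃ F : Set (GenBaire κ),
        (∀ g : GenBaire κ, ∃ f ∈ F, EvDom κ g f) ∧ c = #F} :=
      csInf_mem (dK_set_nonempty hreg)
    obtain ⟨Fd, hFdom, hFcard⟩ := hFmem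
    obtain ⟨E⟩ := stemEnum_exists hreg hunc hsm
    set J : Set (Set (GenCantor κ)) := Set.image2 (fun y f => Dhat E y f) X Fd with hJ
    have hJmeag : ∀ A ∈ J, IsKMeager κ A := by
      rintro A ⟨y, hy, f, hf, rfl⟩
      exact Dhat_meager E hreg y f
    have hJcof : ∀ A, IsKMeager κ A → ∃ B ∈ J, A ⊆ B := fun A hA =>
      main_aux hreg hunc hsm E hXnm hFdom hA
    have hcof : cofM κ ≤ #J := csInf_le' ⟨J, hJmeag, hJcof, rfl⟩
    have haleph : ℵ₀ ≤ #X := by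
      by_contra h
      push_neg at h
      exact hXnm (meager_of_small hreg (h.le.trans (aleph0_le_lift hunc)))
    calc cofM κ ≤ #J := hcof
      _ ≤ #X * #Fd := Cardinal.mk_image2_le
      _ ≤ max (max #X #Fd) ℵ₀ := Cardinal.mul_le_max _ _
      _ ≤ max (dK κ) (nonM κ) := by
          apply max_le (max_le ?_ ?_) ?_
          · rw [← hXcard]; exact le_max_right _ _
          · rw [← hFcard]; exact le_max_left _ _
          · exact haleph.trans (by rw [← hXcard]; exact le_max_right _ _)
  · -- degenerate case: every set is κ-meager
    push_neg at hX
    have h1 : cofM κ ≤ 1 := by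
      apply csInf_le'
      refine ⟨{Set.univ}, ?_, ?_, ?_⟩
      · intro A hA
        rw [Set.mem_singleton_iff] at hA
        subst hA
        exact hX _
      · intro A _
        exact ⟨Set.univ, Set.mem_singleton _, A.subset_univ⟩
      · exact (Cardinal.mk_singleton _).symm
    have h2 : (1 : Cardinal.{1}) ≤ dK κ := by
      apply le_csInf (dK_set_nonempty hreg)
      rintro c ⟨F, hdom, rfl⟩
      rw [Cardinal.one_le_iff_ne_zero, Cardinal.mk_ne_zero_iff]
      obtain ⟨f, hf, _⟩ := hdom (fun β => β)
      exact ⟨⟨f, hf⟩⟩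
    exact h1.trans (h2.trans (le_max_left _ _))

end GenCichon
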